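/- For every natural number n ≥ 1, every associative unital algebra R over the complex numbers (not assumed commutative), and all elements a, b, c of R satisfying 2ab = a² + b² + c² and bc = cb, one has (n+1)·a·bⁿ = a^{n+1} + n·b^{n+1} + ∑_{k=1}^{⌊(n+1)/2⌋} ( u_n^k·a^{n+1−2k} + v_n^k·b^{n+1−2k} )·c^{2k}, where u_n^k = (n+1)·α_n^{n+1−2k} and v_n^k = (n+1)·λ_n^{n+1−2k}, with α_n^j and λ_n^j the coefficients of X^j in A_n(X) and C_n(X) respectively, and where multiplication by the complex scalars u_n^k, v_n^k is via the algebra structure. -/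

import Mathlib

open Polynomial Finset

/-- The pair of polynomial sequences (Aₙ, Cₙ) from the paper:
A₀ = X, C₀ = 0, and
A_{n+1} = ((n+1)/(n+2))·(X·Aₙ + ∑_{k=0}^{n} λₙᵏ·A_k),
C_{n+1} = ((n+1)/(n+2))·((X²+1)·Xⁿ + ∑_{k=0}^{n} λₙᵏ·C_k),
where λₙᵏ is the coefficient of Xᵏ in Cₙ. -/
noncomputable def AC : ℕ → Polynomial ℂ × Polynomial ℂ
  | 0 => (Polynomial.X, 0)
  | (n+1) =>
    (((n+1 : ℂ)/(n+2)) • (Polynomial.X * (AC n).1 +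
        ∑ k ∈ (Finset.range (n+1)).attach, ((AC n).2.coeff k) • (AC k).1),
     ((n+1 : ℂ)/(n+2)) • ((Polynomial.X^2 + 1) * Polynomial.X^n +
        ∑ k ∈ (Finset.range (n+1)).attach, ((AC n).2.coeff k) • (AC k).2))
  decreasing_by
  all_goals first
    | exact Nat.lt_succ_self n
    | exact Nat.lt_succ_of_lt (Finset.mem_range.mp k.2)
    | exact Finset.mem_range.mp k.2

noncomputable def polyA (n : ℕ) : Polynomial ℂ := (AC n).1
noncomputable def polyC (n : ℕ) : Polynomial ℂ := (AC n).2


lemma polyA_succ (n : ℕ) : polyA (n+1) = ((n+1 : ℂ)/(n+2)) • (X * polyA n +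
    ∑ k ∈ Finset.range (n+1), ((polyC n).coeff k) • polyA k) := by
  rw [polyA, AC]
  simp only [← Finset.sum_attach (Finset.range (n+1)) (fun k => ((polyC n).coeff k) • polyA k)]
  rfl

lemma polyC_succ (n : ℕ) : polyC (n+1) = ((n+1 : ℂ)/(n+2)) • ((X^2 + 1) * X^n +
    ∑ k ∈ Finset.range (n+1), ((polyC n).coeff k) • polyC k) := by
  rw [polyC, AC]
  simp only [← Finset.sum_attach (Finset.range (n+1)) (fun k => ((polyC n).coeff k) • polyC k)]
  rfl

lemma polyA_zero : polyA 0 = X := by rw [polyA, AC]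
lemma polyC_zero : polyC 0 = 0 := by rw [polyC, AC]

lemma sq_expand (n : ℕ) : (X^2 + 1 : Polynomial ℂ) * X^n = X^(n+2) + X^n := by ring

lemma coeff_eq_zero : ∀ n : ℕ, ∀ j : ℕ, n + 1 < j →
    (polyA n).coeff j = 0 ∧ (polyC n).coeff j = 0 := by
  intro n
  induction n using Nat.strong_induction_on with
  | _ n IH =>
    match n with
    | 0 =>
      intro j hj
      constructor
      · rw [polyA_zero, coeff_X, if_neg (by omega)]
      · simp [polyC_zero]
    | (m+1) =>
      intro j hj
      obtain ⟨jj, rfl⟩ : ∃ jj, j = jj + 1 := ⟨j - 1, by omega⟩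
      have hzA : ∑ k ∈ Finset.range (m+1), ((polyC m).coeff k) • (polyA k).coeff (jj+1) = 0 := by
        refine Finset.sum_eq_zero fun k hk => ?_
        have hk' := Finset.mem_range.mp hk
        rw [(IH k (by omega) (jj+1) (by omega)).1, smul_zero]
      have hzC : ∑ k ∈ Finset.range (m+1), ((polyC m).coeff k) • (polyC k).coeff (jj+1) = 0 := by
        refine Finset.sum_eq_zero fun k hk => ?_
        have hk' := Finset.mem_range.mp hk
        rw [(IH k (by omega) (jj+1) (by omega)).2, smul_zero]
      constructor
      · rw [polyA_succ, coeff_smul, coeff_add, coeff_X_mul, finset_sum_coeff,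
          (IH m (by omega) jj (by omega)).1]
        simp only [coeff_smul] at hzA ⊢
        rw [hzA]
        simp
      · rw [polyC_succ, coeff_smul, coeff_add, sq_expand, coeff_add, coeff_X_pow, coeff_X_pow,
          finset_sum_coeff, if_neg (by omega), if_neg (by omega)]
        simp only [coeff_smul] at hzC ⊢
        rw [hzC]
        simp

lemma coeffA_eq_zero {n j : ℕ} (h : n + 1 < j) : (polyA n).coeff j = 0 := (coeff_eq_zero n j h).1
lemma coeffC_eq_zero {n j : ℕ} (h : n + 1 < j) : (polyC n).coeff j = 0 := (coeff_eq_zero n j h).2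

lemma lead : ∀ n : ℕ, (polyA n).coeff (n+1) = 1/(n+1) ∧ (polyC n).coeff (n+1) = n/(n+1) := by
  intro n
  induction n with
  | zero => simp [polyA_zero, polyC_zero]
  | succ m IH =>
    have hsum0 : ∀ (f : ℕ → Polynomial ℂ), (∀ k, k < m+1 → (f k).coeff (m+2) = 0) →
        (∑ k ∈ Finset.range (m+1), ((polyC m).coeff k) • f k).coeff (m+2) = 0 := by
      intro f hf
      rw [finset_sum_coeff]
      refine Finset.sum_eq_zero fun k hk => ?_
      rw [coeff_smul, hf k (Finset.mem_range.mp hk), smul_zero]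
    have hm1 : (m : ℂ) + 1 ≠ 0 := Nat.cast_add_one_ne_zero m
    have hm2 : (m : ℂ) + 1 + 1 ≠ 0 := by
      have h := Nat.cast_add_one_ne_zero (R := ℂ) (m+1); push_cast at h; exact h
    have hm2' : (m : ℂ) + 2 ≠ 0 := by
      intro hcon; exact hm2 (by linear_combination hcon)
    constructor
    · rw [polyA_succ, coeff_smul, coeff_add, coeff_X_mul, IH.1,
        hsum0 _ (fun k hk => coeffA_eq_zero (by omega)), add_zero, smul_eq_mul,
        div_mul_div_comm, mul_one]
      push_cast
      rw [div_eq_div_iff (mul_ne_zero hm2' hm1) hm2]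
      ring
    · rw [polyC_succ, coeff_smul, coeff_add, sq_expand, coeff_add, coeff_X_pow, coeff_X_pow,
        hsum0 _ (fun k hk => coeffC_eq_zero (by omega)), add_zero, if_pos rfl,
        if_neg (by omega), add_zero, smul_eq_mul, mul_one]
      push_cast
      rw [div_eq_div_iff hm2' hm2]
      ring

lemma parity : ∀ n : ℕ, ∀ j : ℕ, (j + n) % 2 = 0 →
    (polyA n).coeff j = 0 ∧ (polyC n).coeff j = 0 := by
  intro n
  induction n using Nat.strong_induction_on with
  | _ n IH =>
    match n with
    | 0 =>
      intro j hj
      refine ⟨?_, by simp [polyC_zero]⟩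
      rw [polyA_zero, coeff_X, if_neg (by omega)]
    | (m+1) =>
      intro j hj
      have hsum0 : ∀ (f : ℕ → Polynomial ℂ), (∀ k, k < m+1 → (k + m) % 2 = 0 ∨ (f k).coeff j = 0) →
          (∑ k ∈ Finset.range (m+1), ((polyC m).coeff k) • f k).coeff j = 0 := by
        intro f hf
        rw [finset_sum_coeff]
        refine Finset.sum_eq_zero fun k hk => ?_
        rw [coeff_smul]
        rcases hf k (Finset.mem_range.mp hk) with hx | hx
        · rw [(IH m (by omega) k hx).2, zero_smul]
        · rw [hx, smul_zero]
      constructor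
      · rw [polyA_succ, coeff_smul, coeff_add]
        rw [hsum0 _ (fun k hk => by
          rcases Nat.even_or_odd (k + m) with he | ho
          · exact Or.inl (Nat.even_iff.mp he)
          · have ho' := Nat.odd_iff.mp ho
            exact Or.inr ((IH k (by omega) j (by omega)).1)), add_zero]
        rcases j with _ | jj
        · simp
        · rw [coeff_X_mul, (IH m (by omega) jj (by omega)).1, smul_zero]
      · rw [polyC_succ, coeff_smul, coeff_add, sq_expand, coeff_add, coeff_X_pow, coeff_X_pow]
        rw [hsum0 _ (fun k hk => by
          rcases Nat.even_or_odd (k + m) with he | ho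
          · exact Or.inl (Nat.even_iff.mp he)
          · have ho' := Nat.odd_iff.mp ho
            exact Or.inr ((IH k (by omega) j (by omega)).2)), add_zero]
        rw [if_neg (by omega), if_neg (by omega), add_zero, smul_zero]

section Main
variable {R : Type*} [Ring R] [Algebra ℂ R] (a b c : R)

/-- The representation `Σ_j α_n^j a^j c^{n+1-j} + λ_n^j b^j c^{n+1-j}`. -/
noncomputable def rep (n : ℕ) : R := ∑ j ∈ Finset.range (n+2),
  ((polyA n).coeff j • (a^j * c^(n+1-j)) + (polyC n).coeff j • (b^j * c^(n+1-j)))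

lemma repc {j n : ℕ} (hjn : j ≤ n) : rep a b c j * c^(n+1-j) =
    ∑ i ∈ Finset.range (n+3),
      ((polyA j).coeff i • (a^i * c^(n+2-i)) + (polyC j).coeff i • (b^i * c^(n+2-i))) := by
  rw [rep, Finset.sum_mul]
  have step : ∀ i ∈ Finset.range (j+2),
      ((polyA j).coeff i • (a ^ i * c ^ (j + 1 - i)) +
        (polyC j).coeff i • (b ^ i * c ^ (j + 1 - i))) * c ^ (n + 1 - j)
      = ((polyA j).coeff i • (a^i * c^(n+2-i)) + (polyC j).coeff i • (b^i * c^(n+2-i))) := by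
    intro i hi
    have hi' := Finset.mem_range.mp hi
    have h1 : (j+1-i) + (n+1-j) = n+2-i := by omega
    rw [add_mul, smul_mul_assoc, smul_mul_assoc, mul_assoc, mul_assoc, ← pow_add, h1]
  rw [Finset.sum_congr rfl step]
  refine Finset.sum_subset (Finset.range_subset_range.mpr (by omega)) (fun i hi hni => ?_)
  rw [Finset.mem_range, not_lt] at hni
  rw [coeffA_eq_zero (by omega), coeffC_eq_zero (by omega), zero_smul, zero_smul, add_zero]

lemma main_lemma (h : 2 * (a * b) = a ^ 2 + b ^ 2 + c ^ 2) (hbc : b * c = c * b) :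
    ∀ n : ℕ, a * b ^ n = rep a b c n := by
  intro n
  induction n using Nat.strong_induction_on with
  | _ n IH =>
    match n with
    | 0 =>
      rw [rep]
      simp [polyA_zero, polyC_zero, coeff_X]
    | (m+1) =>
      have hm1 : (m : ℂ) + 1 ≠ 0 := Nat.cast_add_one_ne_zero m
      have hm2 : (m : ℂ) + 1 + 1 ≠ 0 := by
        have hx := Nat.cast_add_one_ne_zero (R := ℂ) (m+1); push_cast at hx; exact hx
      have hm2' : (m : ℂ) + 2 ≠ 0 := by
        intro hcon; exact hm2 (by linear_combination hcon)
      -- Step 1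
      have hcb : c^2 * b^m = b^m * c^2 := ((show Commute b c from hbc).symm.pow_pow 2 m).eq
      have e2 : (b:R)^2 * b^m = b^(m+2) := by rw [← pow_add]; exact congrArg _ (by omega)
      have claim1 : 2 * (a * b^(m+1)) = a * (a * b^m) + b^(m+2) + b^m * c^2 := by
        have hmul := congrArg (fun x : R => x * b^m) h
        calc 2 * (a * b^(m+1)) = 2 * (a*b) * b^m := by
              rw [mul_assoc 2, mul_assoc a, ← pow_succ']
          _ = (a^2+b^2+c^2) * b^m := hmul
          _ = a * (a * b^m) + b^(m+2) + b^m * c^2 := by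
              rw [add_mul, add_mul, sq a, mul_assoc a, e2, hcb]
      -- Step 2 : expansion of a * rep m
      have expand : a * rep a b c m =
          (∑ j ∈ Finset.range (m+2), (polyA m).coeff j • (a^(j+1) * c^(m+1-j)))
        + (∑ j ∈ Finset.range (m+1), (polyC m).coeff j • ((a * b^j) * c^(m+1-j)))
        + (polyC m).coeff (m+1) • (a * b^(m+1)) := by
        rw [rep, Finset.mul_sum]
        have e3 : ∀ j ∈ Finset.range (m+2),
            a * ((polyA m).coeff j • (a^j * c^(m+1-j)) + (polyC m).coeff j • (b^j * c^(m+1-j)))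
            = (polyA m).coeff j • (a^(j+1) * c^(m+1-j))
              + (polyC m).coeff j • ((a * b^j) * c^(m+1-j)) := by
          intro j hj
          rw [mul_add, mul_smul_comm, mul_smul_comm, ← mul_assoc, ← mul_assoc, ← pow_succ']
        rw [Finset.sum_congr rfl e3, Finset.sum_add_distrib, Finset.sum_range_succ
          (fun j => (polyC m).coeff j • ((a * b^j) * c^(m+1-j)))]
        rw [Nat.sub_self, pow_zero, mul_one, add_assoc]
      -- Step 3 : the inner sums, using IH and repc
      have step3 : (∑ j ∈ Finset.range (m+1), (polyC m).coeff j • ((a * b^j) * c^(m+1-j)))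
          = ∑ j ∈ Finset.range (m+1), (polyC m).coeff j •
              ∑ i ∈ Finset.range (m+3),
                ((polyA j).coeff i • (a^i * c^(m+2-i)) + (polyC j).coeff i • (b^i * c^(m+2-i))) := by
        refine Finset.sum_congr rfl fun j hj => ?_
        have hj' := Finset.mem_range.mp hj
        rw [IH j (by omega), repc a b c (by omega : j ≤ m)]
      -- combine : the analytic identity
      have combine : (2:ℂ) • (a * b^(m+1)) = (polyC m).coeff (m+1) • (a * b^(m+1)) +
          ((∑ j ∈ Finset.range (m+2), (polyA m).coeff j • (a^(j+1) * c^(m+1-j)))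
          + (∑ j ∈ Finset.range (m+1), (polyC m).coeff j •
              ∑ i ∈ Finset.range (m+3),
                ((polyA j).coeff i • (a^i * c^(m+2-i)) + (polyC j).coeff i • (b^i * c^(m+2-i))))
          + (b^(m+2) + b^m * c^2)) := by
        have h2 : (2:ℂ) • (a * b^(m+1)) = 2 * (a * b^(m+1)) := by
          rw [two_smul, two_mul]
        rw [h2, claim1, IH m (by omega), expand, step3]
        abel
      -- rep (m+1) in terms of the same big sum
      have key : rep a b c (m+1) = (((m:ℂ)+1)/((m:ℂ)+2)) •
          ((∑ j ∈ Finset.range (m+2), (polyA m).coeff j • (a^(j+1) * c^(m+1-j)))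
          + (∑ j ∈ Finset.range (m+1), (polyC m).coeff j •
              ∑ i ∈ Finset.range (m+3),
                ((polyA j).coeff i • (a^i * c^(m+2-i)) + (polyC j).coeff i • (b^i * c^(m+2-i))))
          + (b^(m+2) + b^m * c^2)) := by
        have U1 : ∑ i ∈ Finset.range (m+3), (X * polyA m).coeff i • (a^i * c^(m+2-i))
            = ∑ j ∈ Finset.range (m+2), (polyA m).coeff j • (a^(j+1) * c^(m+1-j)) := by
          rw [Finset.sum_range_succ']
          have f0 : (X * polyA m).coeff 0 • (a^0 * c^(m+2-0)) = 0 := by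
            simp [mul_coeff_zero]
          rw [f0, add_zero]
          refine Finset.sum_congr rfl fun i hi => ?_
          rw [coeff_X_mul]
          have : m+2-(i+1) = m+1-i := by omega
          rw [this]
        have U3 : ∑ i ∈ Finset.range (m+3),
            ((X^2+1) * X^m : Polynomial ℂ).coeff i • (b^i * c^(m+2-i))
            = b^(m+2) + b^m * c^2 := by
          have e : ∀ i ∈ Finset.range (m+3),
              ((X^2+1) * X^m : Polynomial ℂ).coeff i • (b^i * c^(m+2-i))
              = (if i = m+2 then b^(m+2) else 0) + (if i = m then b^m * c^2 else 0) := by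
            intro i hi
            rw [sq_expand, coeff_add, coeff_X_pow, coeff_X_pow, add_smul,
              ite_smul, ite_smul, zero_smul, one_smul]
            congr 1
            · split_ifs with hc
              · subst hc; rw [Nat.sub_self, pow_zero, mul_one]
              · rfl
            · split_ifs with hc
              · subst hc
                have : i+2-i = 2 := by omega
                rw [this]
              · rfl
          rw [Finset.sum_congr rfl e, Finset.sum_add_distrib,
            Finset.sum_ite_eq' (Finset.range (m+3)) (m+2), Finset.sum_ite_eq' (Finset.range (m+3)) m,
            if_pos (Finset.mem_range.mpr (by omega)), if_pos (Finset.mem_range.mpr (by omega))]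
        have U2 : ∑ i ∈ Finset.range (m+3),
              ((∑ k ∈ Finset.range (m+1), (polyC m).coeff k • polyA k).coeff i • (a^i * c^(m+2-i))
               + (∑ k ∈ Finset.range (m+1), (polyC m).coeff k • polyC k).coeff i • (b^i * c^(m+2-i)))
            = ∑ j ∈ Finset.range (m+1), (polyC m).coeff j •
                ∑ i ∈ Finset.range (m+3),
                  ((polyA j).coeff i • (a^i * c^(m+2-i)) + (polyC j).coeff i • (b^i * c^(m+2-i))) := by
          calc ∑ i ∈ Finset.range (m+3),
              ((∑ k ∈ Finset.range (m+1), (polyC m).coeff k • polyA k).coeff i • (a^i * c^(m+2-i))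
               + (∑ k ∈ Finset.range (m+1), (polyC m).coeff k • polyC k).coeff i • (b^i * c^(m+2-i)))
              = ∑ i ∈ Finset.range (m+3), ∑ k ∈ Finset.range (m+1), (polyC m).coeff k •
                  ((polyA k).coeff i • (a^i * c^(m+2-i)) + (polyC k).coeff i • (b^i * c^(m+2-i))) := by
                refine Finset.sum_congr rfl fun i hi => ?_
                rw [finset_sum_coeff, finset_sum_coeff]
                simp only [coeff_smul, smul_eq_mul]
                rw [Finset.sum_smul, Finset.sum_smul, ← Finset.sum_add_distrib]
                refine Finset.sum_congr rfl fun k hk => ?_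
                rw [mul_smul, mul_smul, smul_add]
            _ = _ := by
                rw [Finset.sum_comm]
                exact Finset.sum_congr rfl fun k hk => (Finset.smul_sum).symm
        calc rep a b c (m+1)
            = ∑ i ∈ Finset.range (m+3), (((m:ℂ)+1)/((m:ℂ)+2)) •
                (((X * polyA m + ∑ k ∈ Finset.range (m+1), (polyC m).coeff k • polyA k).coeff i)
                    • (a^i * c^(m+2-i))
                 + (((X^2+1) * X^m + ∑ k ∈ Finset.range (m+1), (polyC m).coeff k • polyC k).coeff i)
                    • (b^i * c^(m+2-i))) := by
              rw [rep]
              refine Finset.sum_congr rfl fun i hi => ?_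
              rw [polyA_succ, polyC_succ, coeff_smul, coeff_smul, smul_eq_mul, smul_eq_mul,
                mul_smul, mul_smul, smul_add]
          _ = (((m:ℂ)+1)/((m:ℂ)+2)) • ∑ i ∈ Finset.range (m+3),
                ((X * polyA m).coeff i • (a^i * c^(m+2-i))
                 + (((∑ k ∈ Finset.range (m+1), (polyC m).coeff k • polyA k).coeff i • (a^i * c^(m+2-i)))
                    + ((∑ k ∈ Finset.range (m+1), (polyC m).coeff k • polyC k).coeff i • (b^i * c^(m+2-i))))
                 + ((X^2+1) * X^m : Polynomial ℂ).coeff i • (b^i * c^(m+2-i))) := by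
              rw [Finset.smul_sum]
              refine Finset.sum_congr rfl fun i hi => ?_
              rw [coeff_add, coeff_add, add_smul, add_smul]
              exact congrArg _ (by abel)
          _ = _ := by
              rw [Finset.sum_add_distrib, Finset.sum_add_distrib, U1, U2, U3]
      -- final scalar algebra
      have lam := (lead m).2
      rw [key]
      have final : ((2:ℂ) - (polyC m).coeff (m+1)) • (a * b^(m+1)) =
          ((∑ j ∈ Finset.range (m+2), (polyA m).coeff j • (a^(j+1) * c^(m+1-j)))
          + (∑ j ∈ Finset.range (m+1), (polyC m).coeff j •
              ∑ i ∈ Finset.range (m+3),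
                ((polyA j).coeff i • (a^i * c^(m+2-i)) + (polyC j).coeff i • (b^i * c^(m+2-i))))
          + (b^(m+2) + b^m * c^2)) := by
        rw [sub_smul, combine]
        abel
      rw [← final, smul_smul]
      have hsc : ((m:ℂ)+1)/((m:ℂ)+2) * ((2:ℂ) - (polyC m).coeff (m+1)) = 1 := by
        rw [lam]
        field_simp
        ring
      rw [hsc, one_smul]
end Main

theorem stmt19 (n : ℕ) (hn : 1 ≤ n) (R : Type*) [Ring R] [Algebra ℂ R] (a b c : R)
    (h : 2 * (a * b) = a ^ 2 + b ^ 2 + c ^ 2) (hbc : b * c = c * b) :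
    ((n + 1 : ℂ)) • (a * b ^ n) =
      a ^ (n + 1) + (n : ℂ) • b ^ (n + 1) +
        ∑ k ∈ Finset.Icc 1 ((n + 1) / 2),
          (((n + 1 : ℂ) * (polyA n).coeff (n + 1 - 2 * k)) • a ^ (n + 1 - 2 * k) +
            ((n + 1 : ℂ) * (polyC n).coeff (n + 1 - 2 * k)) • b ^ (n + 1 - 2 * k)) *
            c ^ (2 * k) := by
  have hrep := main_lemma a b c h hbc n
  have hm1 : (n:ℂ) + 1 ≠ 0 := Nat.cast_add_one_ne_zero n
  rw [hrep, rep]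
  have h1 : ∑ j ∈ Finset.range (n+2),
      ((polyA n).coeff j • (a^j * c^(n+1-j)) + (polyC n).coeff j • (b^j * c^(n+1-j)))
      = ∑ j ∈ (Finset.range (n+2)).filter (fun j => (j+n) % 2 = 1),
      ((polyA n).coeff j • (a^j * c^(n+1-j)) + (polyC n).coeff j • (b^j * c^(n+1-j))) := by
    refine (Finset.sum_filter_of_ne fun j hj hne => ?_).symm
    by_contra hp
    have hp2 : (j+n) % 2 = 0 := by omega
    rw [(parity n j hp2).1, (parity n j hp2).2, zero_smul, zero_smul, add_zero] at hne
    exact hne rfl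
  have h2 : ∑ j ∈ (Finset.range (n+2)).filter (fun j => (j+n) % 2 = 1),
      ((polyA n).coeff j • (a^j * c^(n+1-j)) + (polyC n).coeff j • (b^j * c^(n+1-j)))
      = ∑ k ∈ Finset.Icc 0 ((n+1)/2),
      ((polyA n).coeff (n+1-2*k) • (a^(n+1-2*k) * c^(n+1-(n+1-2*k)))
        + (polyC n).coeff (n+1-2*k) • (b^(n+1-2*k) * c^(n+1-(n+1-2*k)))) := by
    refine Finset.sum_nbij' (fun j => (n+1-j)/2) (fun k => n+1-2*k) ?_ ?_ ?_ ?_ ?_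
    all_goals intro x hx
    · simp only [Finset.mem_filter, Finset.mem_range] at hx
      simp only [Finset.mem_Icc]; omega
    · simp only [Finset.mem_Icc] at hx
      simp only [Finset.mem_filter, Finset.mem_range]; omega
    · simp only [Finset.mem_filter, Finset.mem_range] at hx; omega
    · simp only [Finset.mem_Icc] at hx; omega
    · simp only [Finset.mem_filter, Finset.mem_range] at hx
      have hxx : n+1-2*((n+1-x)/2) = x := by omega
      rw [hxx]
  have M0 : Finset.Icc 0 ((n+1)/2) = insert 0 (Finset.Icc 1 ((n+1)/2)) := by
    ext x; simp only [Finset.mem_Icc, Finset.mem_insert]; omega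
  rw [h1, h2, M0, Finset.sum_insert (by simp)]
  rw [smul_add]
  have hz : ((n:ℂ)+1) • ((polyA n).coeff (n+1-2*0) • (a^(n+1-2*0) * c^(n+1-(n+1-2*0)))
      + (polyC n).coeff (n+1-2*0) • (b^(n+1-2*0) * c^(n+1-(n+1-2*0))))
      = a^(n+1) + (n:ℂ) • b^(n+1) := by
    have e0 : n+1-2*0 = n+1 := by omega
    rw [e0, Nat.sub_self, pow_zero, mul_one, mul_one, (lead n).1, (lead n).2,
      smul_add, smul_smul, smul_smul]
    rw [show ((n:ℂ)+1) * (1/((n:ℂ)+1)) = 1 by field_simp]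
    rw [show ((n:ℂ)+1) * ((n:ℂ)/((n:ℂ)+1)) = (n:ℂ) by field_simp]
    rw [one_smul]
  rw [hz, Finset.smul_sum]
  congr 1
  refine Finset.sum_congr rfl fun k hk => ?_
  simp only [Finset.mem_Icc] at hk
  have he : n+1-(n+1-2*k) = 2*k := by omega
  rw [he, smul_add, smul_smul, smul_smul, ← smul_mul_assoc, ← smul_mul_assoc, ← add_mul]
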